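/- Let G be a finite simple graph in which every vertex has positive degree, with adjacency matrix A, degrees d_i, and symmetrically normalized adjacency matrix S = D^{-1/2} A D^{-1/2}. Fix a real number α with 0 < α < 1 and a vector b : V → ℝ, and define the local and global consistency cost E(f) = (1/2) Σ_{i,j} A_{ij} (f_i/√d_i − f_j/√d_j)² + (1/α − 1) Σ_i (f_i − b_i)². Then E has a unique minimizer over f : V → ℝ, namely f* = (1−α)(I − αS)^{-1} b; i.e. E(f*) < E(f) for every f ≠ f*. -/

import Mathlib

open Matrix Finset

section LGCAux

variable {V : Type*} [Fintype V] [DecidableEq V] (G : SimpleGraph V) [DecidableRel G.Adj]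

/-- Auxiliary bilinear form `Q(f,h) = Σ_{ij} A_{ij} (f_i/√d_i)(h_j/√d_j)`. -/
noncomputable def lgcQ (f h : V → ℝ) : ℝ :=
  ∑ i, ∑ j, G.adjMatrix ℝ i j * (f i / Real.sqrt (G.degree i)) * (h j / Real.sqrt (G.degree j))

lemma lgc_adj_symm (i j : V) : G.adjMatrix ℝ i j = G.adjMatrix ℝ j i := by
  simp [SimpleGraph.adj_comm]

lemma lgc_row_sum (i : V) : ∑ j, G.adjMatrix ℝ i j = G.degree i := by
  simp [SimpleGraph.degree, SimpleGraph.neighborFinset_eq_filter, Finset.sum_boole]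

lemma lgc_col_sum (j : V) : ∑ i, G.adjMatrix ℝ i j = G.degree j := by
  simp_rw [fun i => lgc_adj_symm G i j]
  exact lgc_row_sum G j

lemma lgcQ_symm (f h : V → ℝ) : lgcQ G f h = lgcQ G h f := by
  rw [lgcQ, lgcQ, Finset.sum_comm]
  refine Finset.sum_congr rfl fun j _ => Finset.sum_congr rfl fun i _ => ?_
  rw [lgc_adj_symm G i j]; ring

lemma lgc_expand (hdeg : ∀ v : V, 0 < G.degree v) (f h : V → ℝ) :
    ∑ i, ∑ j, G.adjMatrix ℝ i j *
      ((f i / Real.sqrt (G.degree i) - f j / Real.sqrt (G.degree j)) *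
       (h i / Real.sqrt (G.degree i) - h j / Real.sqrt (G.degree j)))
    = 2 * (∑ i, f i * h i) - 2 * lgcQ G f h := by
  set r : V → ℝ := fun i => Real.sqrt (G.degree i) with hrdef
  have hrpos : ∀ i, 0 < r i := fun i => Real.sqrt_pos.2 (by exact_mod_cast hdeg i)
  have hrsq : ∀ i, r i * r i = (G.degree i : ℝ) := fun i =>
    Real.mul_self_sqrt (by positivity)
  have e1 : ∀ i j, G.adjMatrix ℝ i j * ((f i / r i - f j / r j) * (h i / r i - h j / r j))
      = (G.adjMatrix ℝ i j * (f i / r i * (h i / r i))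
          + G.adjMatrix ℝ i j * (f j / r j * (h j / r j)))
        - (G.adjMatrix ℝ i j * (f i / r i) * (h j / r j)
          + G.adjMatrix ℝ i j * (f j / r j) * (h i / r i)) := by
    intro i j; ring
  rw [Finset.sum_congr rfl fun i _ => Finset.sum_congr rfl fun j _ => e1 i j]
  simp only [Finset.sum_sub_distrib, Finset.sum_add_distrib]
  have h1 : ∑ i, ∑ j, G.adjMatrix ℝ i j * (f i / r i * (h i / r i)) = ∑ i, f i * h i := by
    refine Finset.sum_congr rfl fun i _ => ?_
    rw [← Finset.sum_mul, lgc_row_sum, ← hrsq i]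
    rw [div_mul_div_comm, mul_comm (f i) (h i), mul_comm]
    exact div_mul_cancel₀ _ (ne_of_gt (mul_pos (hrpos i) (hrpos i)))
  have h2 : ∑ i, ∑ j, G.adjMatrix ℝ i j * (f j / r j * (h j / r j)) = ∑ i, f i * h i := by
    rw [Finset.sum_comm]
    refine Finset.sum_congr rfl fun j _ => ?_
    rw [← Finset.sum_mul, lgc_col_sum, ← hrsq j]
    rw [div_mul_div_comm, mul_comm (f j) (h j), mul_comm]
    exact div_mul_cancel₀ _ (ne_of_gt (mul_pos (hrpos j) (hrpos j)))
  have h3 : ∑ i, ∑ j, G.adjMatrix ℝ i j * (f i / r i) * (h j / r j) = lgcQ G f h := rfl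
  have h4 : ∑ i, ∑ j, G.adjMatrix ℝ i j * (f j / r j) * (h i / r i) = lgcQ G f h := by
    rw [lgcQ_symm]
    refine Finset.sum_congr rfl fun i _ => Finset.sum_congr rfl fun j _ => ?_
    ring
  rw [h1, h2, h3, h4]; ring

lemma lgc_quad_nonneg (g : V → ℝ) :
    0 ≤ ∑ i, ∑ j, G.adjMatrix ℝ i j *
      ((g i / Real.sqrt (G.degree i) - g j / Real.sqrt (G.degree j)) *
       (g i / Real.sqrt (G.degree i) - g j / Real.sqrt (G.degree j))) := by
  refine Finset.sum_nonneg fun i _ => Finset.sum_nonneg fun j _ => ?_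
  refine mul_nonneg ?_ (mul_self_nonneg _)
  rw [SimpleGraph.adjMatrix_apply]
  split <;> norm_num

lemma lgcQ_le (hdeg : ∀ v : V, 0 < G.degree v) (g : V → ℝ) :
    lgcQ G g g ≤ ∑ i, g i * g i := by
  have := lgc_expand G hdeg g g
  have h0 := lgc_quad_nonneg G g
  linarith

end LGCAux

/-- The local and global consistency cost
`E(f) = (1/2) Σ_{i,j} A_{ij} (f_i/√d_i − f_j/√d_j)² + (1/α − 1) Σ_i (f_i − b_i)²`
over a finite simple graph with all degrees positive has the unique minimizer
`f* = (1−α)(I − αS)⁻¹ b`, where `S = D^{-1/2} A D^{-1/2}` and `0 < α < 1`. -/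
theorem local_global_consistency_unique_minimizer
    {V : Type*} [Fintype V] [DecidableEq V]
    (G : SimpleGraph V) [DecidableRel G.Adj]
    (hdeg : ∀ v : V, 0 < G.degree v)
    (S : Matrix V V ℝ)
    (hS : S = Matrix.diagonal (fun v => (Real.sqrt (G.degree v))⁻¹) *
      G.adjMatrix ℝ * Matrix.diagonal (fun v => (Real.sqrt (G.degree v))⁻¹))
    (α : ℝ) (hα0 : 0 < α) (hα1 : α < 1) (b : V → ℝ)
    (E : (V → ℝ) → ℝ)
    (hE : ∀ f : V → ℝ, E f =
      (1 / 2) * ∑ i, ∑ j, G.adjMatrix ℝ i j *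
          (f i / Real.sqrt (G.degree i) - f j / Real.sqrt (G.degree j)) ^ 2 +
        (1 / α - 1) * ∑ i, (f i - b i) ^ 2)
    (fstar : V → ℝ)
    (hfstar : fstar = (1 - α) • (1 - α • S)⁻¹.mulVec b) :
    ∀ f : V → ℝ, f ≠ fstar → E fstar < E f := by
  set c : ℝ := 1 / α - 1 with hcdef
  have hcpos : 0 < c := by
    have h1 : 1 < 1 / α := (one_lt_div hα0).2 hα1
    rw [hcdef]; linarith
  -- entries of S
  have hSentry : ∀ i j, S i j =
      (Real.sqrt (G.degree i))⁻¹ * G.adjMatrix ℝ i j * (Real.sqrt (G.degree j))⁻¹ := by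
    intro i j
    rw [hS, Matrix.mul_diagonal, Matrix.diagonal_mul]
  -- quadratic form of S equals lgcQ
  have hQS : ∀ u x : V → ℝ, ∑ i, x i * (S.mulVec u) i = lgcQ G u x := by
    intro u x
    rw [lgcQ_symm]
    unfold lgcQ Matrix.mulVec dotProduct
    refine Finset.sum_congr rfl fun i _ => ?_
    rw [Finset.mul_sum]
    refine Finset.sum_congr rfl fun j _ => ?_
    simp only [hSentry]
    have hri : (0:ℝ) < Real.sqrt (G.degree i) := Real.sqrt_pos.2 (by exact_mod_cast hdeg i)
    have hrj : (0:ℝ) < Real.sqrt (G.degree j) := Real.sqrt_pos.2 (by exact_mod_cast hdeg j)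
    field_simp
  -- sum of squares positivity
  have hsq_pos : ∀ x : V → ℝ, x ≠ 0 → 0 < ∑ i, x i * x i := by
    intro x hx
    obtain ⟨i, hi⟩ := Function.ne_iff.mp hx
    refine Finset.sum_pos' (fun j _ => mul_self_nonneg _) ⟨i, Finset.mem_univ i, ?_⟩
    exact mul_self_pos.2 hi
  -- M = 1 - α • S is positive definite
  set M : Matrix V V ℝ := 1 - α • S with hMdef
  have hMherm : M.IsHermitian := by
    have hSsymm : Sᵀ = S := by
      ext i j
      rw [Matrix.transpose_apply, hSentry, hSentry, lgc_adj_symm G i j]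
      ring
    rw [Matrix.IsHermitian, Matrix.conjTranspose_eq_transpose_of_trivial, hMdef,
      Matrix.transpose_sub, Matrix.transpose_smul, hSsymm, Matrix.transpose_one]
  have hMquad : ∀ x : V → ℝ, x ⬝ᵥ M.mulVec x = (∑ i, x i * x i) - α * lgcQ G x x := by
    intro x
    rw [hMdef, Matrix.sub_mulVec, Matrix.one_mulVec, Matrix.smul_mulVec]
    rw [dotProduct_sub, dotProduct_smul]
    have h1 : x ⬝ᵥ x = ∑ i, x i * x i := rfl
    have h2 : x ⬝ᵥ S.mulVec x = ∑ i, x i * (S.mulVec x) i := rfl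
    rw [h1, h2, hQS x x]
    simp [smul_eq_mul]
  have hMpd : M.PosDef := by
    refine Matrix.PosDef.of_dotProduct_mulVec_pos hMherm fun x hx => ?_
    have hx' : (x : V → ℝ) ≠ 0 := hx
    have h1 := lgcQ_le G hdeg x
    have h2 := hsq_pos x hx'
    have hstar : star x = x := by simp
    rw [hstar, hMquad x]
    have : α * lgcQ G x x ≤ α * ∑ i, x i * x i :=
      mul_le_mul_of_nonneg_left h1 hα0.le
    nlinarith
  have hdet : IsUnit M.det := isUnit_iff_ne_zero.2 (ne_of_gt hMpd.det_pos)
  -- fstar satisfies the linear equation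
  have hMfstar : M.mulVec fstar = (1 - α) • b := by
    rw [hfstar, Matrix.mulVec_smul, Matrix.mulVec_mulVec, Matrix.mul_nonsing_inv _ hdet,
      Matrix.one_mulVec]
  have hstat : ∀ i, fstar i - α * (S.mulVec fstar) i = (1 - α) * b i := by
    intro i
    have := congrFun hMfstar i
    rw [hMdef, Matrix.sub_mulVec, Matrix.one_mulVec, Matrix.smul_mulVec] at this
    simpa [smul_eq_mul] using this
  have hbr : ∀ i, fstar i - (S.mulVec fstar) i + c * (fstar i - b i) = 0 := by
    intro i
    have hSfi : (S.mulVec fstar) i = (fstar i - (1 - α) * b i) / α := by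
      rw [eq_div_iff hα0.ne']
      linarith [hstat i]
    rw [hSfi, hcdef]
    field_simp
    ring
  -- main comparison
  intro f hf
  set h : V → ℝ := f - fstar with hhdef
  have hhne : h ≠ 0 := sub_ne_zero.2 hf
  have hfi : ∀ i, f i = fstar i + h i := by
    intro i; simp [hhdef]
  -- expand the smoothness term
  have e1 : ∀ i j, G.adjMatrix ℝ i j *
        (f i / Real.sqrt (G.degree i) - f j / Real.sqrt (G.degree j)) ^ 2
      = G.adjMatrix ℝ i j *
          (fstar i / Real.sqrt (G.degree i) - fstar j / Real.sqrt (G.degree j)) ^ 2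
        + 2 * (G.adjMatrix ℝ i j *
            ((fstar i / Real.sqrt (G.degree i) - fstar j / Real.sqrt (G.degree j)) *
             (h i / Real.sqrt (G.degree i) - h j / Real.sqrt (G.degree j))))
        + G.adjMatrix ℝ i j *
            ((h i / Real.sqrt (G.degree i) - h j / Real.sqrt (G.degree j)) *
             (h i / Real.sqrt (G.degree i) - h j / Real.sqrt (G.degree j))) := by
    intro i j
    rw [hfi i, hfi j, add_div, add_div]
    ring
  have e2 : ∀ i, (f i - b i) ^ 2
      = (fstar i - b i) ^ 2 + 2 * ((fstar i - b i) * h i) + h i * h i := by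
    intro i; rw [hfi i]; ring
  have hsum1 : ∑ i, ∑ j, G.adjMatrix ℝ i j *
        (f i / Real.sqrt (G.degree i) - f j / Real.sqrt (G.degree j)) ^ 2
      = (∑ i, ∑ j, G.adjMatrix ℝ i j *
          (fstar i / Real.sqrt (G.degree i) - fstar j / Real.sqrt (G.degree j)) ^ 2)
        + 2 * (∑ i, ∑ j, G.adjMatrix ℝ i j *
            ((fstar i / Real.sqrt (G.degree i) - fstar j / Real.sqrt (G.degree j)) *
             (h i / Real.sqrt (G.degree i) - h j / Real.sqrt (G.degree j))))
        + ∑ i, ∑ j, G.adjMatrix ℝ i j *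
            ((h i / Real.sqrt (G.degree i) - h j / Real.sqrt (G.degree j)) *
             (h i / Real.sqrt (G.degree i) - h j / Real.sqrt (G.degree j))) := by
    simp_rw [e1, Finset.sum_add_distrib, ← Finset.mul_sum]
  have hc2 : c * ∑ i, (f i - b i) ^ 2
      = c * (∑ i, (fstar i - b i) ^ 2) + 2 * (c * ∑ i, (fstar i - b i) * h i)
        + c * ∑ i, h i * h i := by
    have : ∑ i, (f i - b i) ^ 2
        = (∑ i, (fstar i - b i) ^ 2) + 2 * (∑ i, (fstar i - b i) * h i)
          + ∑ i, h i * h i := by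
      simp_rw [e2, Finset.sum_add_distrib, ← Finset.mul_sum]
    rw [this]; ring
  have hcross : ∑ i, ∑ j, G.adjMatrix ℝ i j *
      ((fstar i / Real.sqrt (G.degree i) - fstar j / Real.sqrt (G.degree j)) *
       (h i / Real.sqrt (G.degree i) - h j / Real.sqrt (G.degree j)))
      = 2 * (∑ i, fstar i * h i) - 2 * lgcQ G fstar h :=
    lgc_expand G hdeg fstar h
  -- linear (cross) terms vanish
  have hlin : (∑ i, fstar i * h i) - lgcQ G fstar h + c * ∑ i, (fstar i - b i) * h i = 0 := by
    rw [← hQS fstar h, Finset.mul_sum, ← Finset.sum_sub_distrib, ← Finset.sum_add_distrib]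
    have : ∀ i, fstar i * h i - h i * (S.mulVec fstar) i + c * ((fstar i - b i) * h i)
        = h i * (fstar i - (S.mulVec fstar) i + c * (fstar i - b i)) := by
      intro i; ring
    simp_rw [this, hbr, mul_zero, Finset.sum_const_zero]
  have hquadh : 0 ≤ ∑ i, ∑ j, G.adjMatrix ℝ i j *
      ((h i / Real.sqrt (G.degree i) - h j / Real.sqrt (G.degree j)) *
       (h i / Real.sqrt (G.degree i) - h j / Real.sqrt (G.degree j))) :=
    lgc_quad_nonneg G h
  have hh2 : 0 < ∑ i, h i * h i := hsq_pos h hhne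
  have hch2 : 0 < c * ∑ i, h i * h i := mul_pos hcpos hh2
  have hEf : E f = E fstar
      + (1 / 2 * ∑ i, ∑ j, G.adjMatrix ℝ i j *
          ((h i / Real.sqrt (G.degree i) - h j / Real.sqrt (G.degree j)) *
           (h i / Real.sqrt (G.degree i) - h j / Real.sqrt (G.degree j)))
        + c * ∑ i, h i * h i) := by
    rw [hE f, hE fstar, hsum1, hc2, hcross]
    linear_combination 2 * hlin
  rw [hEf]
  have hpos : 0 < 1 / 2 * ∑ i, ∑ j, G.adjMatrix ℝ i j *
          ((h i / Real.sqrt (G.degree i) - h j / Real.sqrt (G.degree j)) *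
           (h i / Real.sqrt (G.degree i) - h j / Real.sqrt (G.degree j)))
        + c * ∑ i, h i * h i := by
    clear_value c h
    linarith
  linarith [hpos]
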